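/- (Twist of the rotated cluster variable σ²(A) in Gr(3,8), used in Section 8.1.) For all vectors v₁,…,v₈ ∈ ℝ³, set w_i := v_{i+1}×v_{i+2} with indices taken modulo 8 in {1,…,8}, and write Δ_{abc} := det(v_a,v_b,v_c) and T_{abc} := det(w_a,w_b,w_c). Then T_{356}·T_{247}·T_{138} − T_{356}·T_{347}·T_{128} − T_{237}·T_{456}·T_{138} = Δ₁₂₃·Δ₃₄₅·Δ₄₅₆·Δ₆₇₈·det(v₈×v₁, v₂×v₄, v₅×v₇). That is, T*(σ²(A)) = Δ₁₂₃Δ₃₄₅Δ₄₅₆Δ₆₇₈·Y^{124578}. -/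
import Mathlib


/-- Determinant of the 3×3 real matrix with columns `a`, `b`, `c`. -/
noncomputable def det3 (a b c : Fin 3 → ℝ) : ℝ :=
  (Matrix.of ![a, b, c]).transpose.det

/-- The standard cross product on `ℝ³`. -/
def cross (a b : Fin 3 → ℝ) : Fin 3 → ℝ := crossProduct a b

lemma det3_eq (a b c : Fin 3 → ℝ) :
    det3 a b c = a 0 * (b 1 * c 2 - b 2 * c 1) - a 1 * (b 0 * c 2 - b 2 * c 0)
      + a 2 * (b 0 * c 1 - b 1 * c 0) := by
  rw [det3, Matrix.det_transpose]; simp [Matrix.det_fin_three]; ring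

lemma cross0 (a b : Fin 3 → ℝ) : cross a b 0 = a 1 * b 2 - a 2 * b 1 := by
  simp [cross, crossProduct]
lemma cross1 (a b : Fin 3 → ℝ) : cross a b 1 = a 2 * b 0 - a 0 * b 2 := by
  simp [cross, crossProduct]
lemma cross2 (a b : Fin 3 → ℝ) : cross a b 2 = a 0 * b 1 - a 1 * b 0 := by
  simp [cross, crossProduct]

lemma det3_cross (a b c d e f : Fin 3 → ℝ) :
    det3 (cross a b) (cross c d) (cross e f)
      = det3 a b d * det3 c e f - det3 a b c * det3 d e f := by
  simp only [det3_eq, cross0, cross1, cross2]; ring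

lemma det3_aab (a b : Fin 3 → ℝ) : det3 a a b = 0 := by
  simp only [det3_eq]; ring
lemma det3_abb (a b : Fin 3 → ℝ) : det3 a b b = 0 := by
  simp only [det3_eq]; ring

lemma lemR (v₁ v₃ v₄ v₅ v₆ v₇ v₈ : Fin 3 → ℝ) :
    det3 v₄ v₅ v₇ * det3 v₃ v₄ v₆ * det3 v₅ v₈ v₁
      - det3 v₄ v₅ v₇ * det3 v₃ v₄ v₅ * det3 v₆ v₈ v₁
      - det3 v₃ v₄ v₅ * det3 v₄ v₈ v₁ * det3 v₅ v₆ v₇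
    = det3 v₄ v₅ v₆
        * (det3 v₁ v₄ v₈ * det3 v₃ v₅ v₇ - det3 v₁ v₃ v₈ * det3 v₄ v₅ v₇) := by
  simp only [det3_eq]; ring

lemma lemStar (v₁ v₂ v₃ v₄ v₅ v₇ v₈ : Fin 3 → ℝ) :
    (det3 v₁ v₄ v₈ * det3 v₃ v₅ v₇ - det3 v₁ v₃ v₈ * det3 v₄ v₅ v₇)
        * (det3 v₂ v₃ v₅ * det3 v₄ v₁ v₂ - det3 v₂ v₃ v₄ * det3 v₅ v₁ v₂)
      - det3 v₄ v₅ v₇ * det3 v₅ v₈ v₁ * det3 v₂ v₃ v₄ * det3 v₃ v₁ v₂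
    = det3 v₁ v₂ v₃ * det3 v₃ v₄ v₅
        * (det3 v₈ v₁ v₄ * det3 v₂ v₅ v₇ - det3 v₈ v₁ v₂ * det3 v₄ v₅ v₇) := by
  simp only [det3_eq]; ring

/-- Twist of the rotated Gr(3,8) cluster variable `σ²(A)`:
`T*(σ²(A)) = Δ₁₂₃Δ₃₄₅Δ₄₅₆Δ₆₇₈ · Y^{124578}`. -/
theorem twist_of_sigma2_A (v₁ v₂ v₃ v₄ v₅ v₆ v₇ v₈ w₁ w₂ w₃ w₄ w₅ w₆ w₇ w₈ : Fin 3 → ℝ)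
    (hw₁ : w₁ = cross v₂ v₃) (hw₂ : w₂ = cross v₃ v₄) (hw₃ : w₃ = cross v₄ v₅)
    (hw₄ : w₄ = cross v₅ v₆) (hw₅ : w₅ = cross v₆ v₇) (hw₆ : w₆ = cross v₇ v₈)
    (hw₇ : w₇ = cross v₈ v₁) (hw₈ : w₈ = cross v₁ v₂) :
    det3 w₃ w₅ w₆ * det3 w₂ w₄ w₇ * det3 w₁ w₃ w₈
      - det3 w₃ w₅ w₆ * det3 w₃ w₄ w₇ * det3 w₁ w₂ w₈
      - det3 w₂ w₃ w₇ * det3 w₄ w₅ w₆ * det3 w₁ w₃ w₈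
    = det3 v₁ v₂ v₃ * det3 v₃ v₄ v₅ * det3 v₄ v₅ v₆ * det3 v₆ v₇ v₈
        * det3 (cross v₈ v₁) (cross v₂ v₄) (cross v₅ v₇) := by
  subst hw₁ hw₂ hw₃ hw₄ hw₅ hw₆ hw₇ hw₈
  simp only [det3_cross, det3_aab, det3_abb, mul_zero, zero_mul, sub_zero]
  linear_combination
    (det3 v₆ v₇ v₈ * (det3 v₂ v₃ v₅ * det3 v₄ v₁ v₂ - det3 v₂ v₃ v₄ * det3 v₅ v₁ v₂))
        * lemR v₁ v₃ v₄ v₅ v₆ v₇ v₈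
      + (det3 v₆ v₇ v₈ * det3 v₄ v₅ v₆) * lemStar v₁ v₂ v₃ v₄ v₅ v₇ v₈
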